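/- Let α_1, α_2 ∈ (1,2), let n_1, n_2 ≥ 1 be integers, let c_x, c_y > 0, set N = n_1 n_2, let A = c_x (I_{n_2} ⊗ G_{n_1}^{(α_1)}) + c_y (G_{n_2}^{(α_2)} ⊗ I_{n_1}), and let D be an N×N diagonal matrix with nonnegative diagonal entries. Then the matrix M = I_N - A + D is symmetric positive definite and satisfies, for every i ∈ {1,…,N}, ∑_{j ≠ i} |[M]_{ij}| ≤ [M]_{ii} - 1. -/

import Mathlib

/-- Grünwald–Letnikov coefficients: `g α 0 = 1`,
`g α l = (1 - (α+1)/l) * g α (l-1)` for `l ≥ 1`. -/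
noncomputable def g (α : ℝ) : ℕ → ℝ
  | 0 => 1
  | l + 1 => (1 - (α + 1) / ((l : ℝ) + 1)) * g α l


/-- First column (Toeplitz symbol) of `G_n^{(α)}`: entry at distance `d` is
`2 g₁` if `d = 0`, `g₀ + g₂` if `d = 1`, and `g_{d+1}` if `d ≥ 2`. -/
noncomputable def gSymb (α : ℝ) : ℕ → ℝ
  | 0 => 2 * g α 1
  | 1 => g α 0 + g α 2
  | d + 2 => g α (d + 3)

/-- The symmetric Toeplitz matrix `G_n^{(α)}`. -/
noncomputable def Gmat (α : ℝ) (n : ℕ) : Matrix (Fin n) (Fin n) ℝ :=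
  Matrix.of fun i j => gSymb α (((i : ℤ) - (j : ℤ)).natAbs)

open Matrix Kronecker

/-- `A = c_x (I_{n₂} ⊗ G_{n₁}^{(α₁)}) + c_y (G_{n₂}^{(α₂)} ⊗ I_{n₁})`. -/
noncomputable def Amat (α₁ α₂ : ℝ) (n₁ n₂ : ℕ) (cx cy : ℝ) :
    Matrix (Fin n₂ × Fin n₁) (Fin n₂ × Fin n₁) ℝ :=
  cx • ((1 : Matrix (Fin n₂) (Fin n₂) ℝ) ⊗ₖ Gmat α₁ n₁) +
    cy • (Gmat α₂ n₂ ⊗ₖ (1 : Matrix (Fin n₁) (Fin n₁) ℝ))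

lemma g_one (α : ℝ) : g α 1 = -α := by simp [g]

lemma g_succ (α : ℝ) (m : ℕ) : g α (m+1) = (1 - (α + 1) / ((m : ℝ) + 1)) * g α m := rfl

lemma L1 (α : ℝ) : ∀ m : ℕ, ((m:ℝ)+1) * g α (m+1) = -α * ∑ l ∈ Finset.range (m+1), g α l := by
  intro m
  induction m with
  | zero => simp [g]
  | succ m ih =>
    rw [g_succ, Finset.sum_range_succ]
    push_cast
    have h2 : ((m:ℝ)+1+1) ≠ 0 := by positivity
    field_simp
    ring_nf
    ring_nf at ih
    linarith [ih]

variable {α : ℝ} (h1 : 1 < α) (h2 : α < 2)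

include h1 h2 in
lemma L2 : ∀ m : ℕ, ∑ l ∈ Finset.range (m+2), g α l < 0 := by
  intro m
  induction m with
  | zero => simp [Finset.sum_range_succ, g_one, g]; linarith
  | succ m ih =>
    rw [Finset.sum_range_succ]
    have h := L1 α (m+1)
    push_cast at h
    have hf : ((m:ℝ)+2-α) * (∑ l ∈ Finset.range (m+2), g α l) < 0 :=
      mul_neg_of_pos_of_neg (by linarith) ih
    nlinarith [h, hf, ih]

include h1 h2 in
lemma gpos : ∀ m : ℕ, 0 < g α (m+2) := by
  intro m
  have h := L1 α (m+1)
  push_cast at h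
  have hS := L2 h1 h2 m
  nlinarith [h, hS]

include h1 h2 in
lemma gSymb_nonneg : ∀ e : ℕ, 0 ≤ gSymb α (e+1) := by
  intro e
  match e with
  | 0 =>
    have hg2 := gpos h1 h2 0
    have e1 : gSymb α 1 = g α 0 + g α 2 := rfl
    have e0 : g α 0 = 1 := rfl
    rw [e1, e0]; linarith
  | e+1 =>
    have h := gpos h1 h2 (e+1)
    have he : gSymb α (e+1+1) = g α (e+3) := rfl
    rw [he]; linarith

lemma L6 : ∀ m : ℕ, ∑ e ∈ Finset.Icc 1 (m+1), gSymb α e = (∑ l ∈ Finset.range (m+3), g α l) + α := by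
  intro m
  induction m with
  | zero =>
    have hI : Finset.Icc 1 1 = ({1} : Finset ℕ) := rfl
    rw [hI, Finset.sum_singleton]
    have e1 : gSymb α 1 = g α 0 + g α 2 := rfl
    have e3 : ∑ l ∈ Finset.range 3, g α l = g α 0 + g α 1 + g α 2 := by
      simp [Finset.sum_range_succ]
    rw [e1, e3, g_one]; ring
  | succ m ih =>
    rw [Finset.sum_Icc_succ_top (by omega), ih, Finset.sum_range_succ]
    have : gSymb α (m+2) = g α (m+3) := rfl
    have h4 : ∑ l ∈ Finset.range (m+1+3), g α l = ∑ l ∈ Finset.range (m+3), g α l + g α (m+3) := by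
      rw [show m+1+3 = (m+3)+1 from rfl, Finset.sum_range_succ]
    rw [this, h4]
    ring_nf
    have h5 : ∑ x ∈ Finset.range (3+m), g α x = ∑ x ∈ Finset.range (2+m), g α x + g α (2+m) := by
      rw [show 3+m = (2+m)+1 by omega, Finset.sum_range_succ]
    linarith

include h1 h2 in
lemma rowBound : ∀ m : ℕ, ∑ e ∈ Finset.Icc 1 m, gSymb α e ≤ α := by
  intro m
  match m with
  | 0 => simp; linarith
  | m+1 =>
    rw [L6 m]
    have := L2 h1 h2 (m+1)
    linarith

include h1 h2 in
lemma offdiagSum (n : ℕ) (i : Fin n) :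
    ∑ j ∈ Finset.univ.erase i, gSymb α (((i:ℤ) - (j:ℤ)).natAbs) ≤ 2*α := by
  classical
  have hnn' : ∀ e ∈ Finset.Icc 1 n, 0 ≤ gSymb α e := by
    intro e he
    rw [Finset.mem_Icc] at he
    obtain ⟨e', rfl⟩ : ∃ e', e = e' + 1 := ⟨e - 1, by omega⟩
    exact gSymb_nonneg h1 h2 e'
  have hsplit : (Finset.univ.erase i) =
      (Finset.univ.filter (fun j : Fin n => (j:ℕ) < (i:ℕ))) ∪
      (Finset.univ.filter (fun j : Fin n => (i:ℕ) < (j:ℕ))) := by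
    ext j
    simp only [Finset.mem_erase, Finset.mem_union, Finset.mem_filter, Finset.mem_univ,
      true_and, and_true, Fin.ext_iff, ne_eq]
    omega
  have hdisj : Disjoint (Finset.univ.filter (fun j : Fin n => (j:ℕ) < (i:ℕ)))
      (Finset.univ.filter (fun j : Fin n => (i:ℕ) < (j:ℕ))) := by
    rw [Finset.disjoint_left]
    intro j hj hj'
    simp only [Finset.mem_filter] at hj hj'
    omega
  rw [hsplit, Finset.sum_union hdisj]
  have bound1 : ∑ j ∈ Finset.univ.filter (fun j : Fin n => (j:ℕ) < (i:ℕ)),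
      gSymb α (((i:ℤ) - (j:ℤ)).natAbs) ≤ α := by
    rw [Finset.sum_congr rfl (fun j hj => by
      simp only [Finset.mem_filter] at hj
      rw [show ((i:ℤ) - (j:ℤ)).natAbs = (i:ℕ) - (j:ℕ) by omega])]
    rw [← Finset.sum_image (f := fun e => gSymb α e)
      (g := fun j : Fin n => (i:ℕ) - (j:ℕ)) (by
        intro x hx y hy hxy
        simp only [Finset.mem_coe, Finset.mem_filter] at hx hy
        dsimp only at hxy
        exact Fin.ext (by omega))]
    refine le_trans (Finset.sum_le_sum_of_subset_of_nonneg ?_ (fun e he _ => hnn' e he))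
      (rowBound h1 h2 n)
    intro e he
    simp only [Finset.mem_image, Finset.mem_filter] at he
    obtain ⟨j, ⟨-, hj⟩, rfl⟩ := he
    rw [Finset.mem_Icc]
    have := i.isLt
    omega
  have bound2 : ∑ j ∈ Finset.univ.filter (fun j : Fin n => (i:ℕ) < (j:ℕ)),
      gSymb α (((i:ℤ) - (j:ℤ)).natAbs) ≤ α := by
    rw [Finset.sum_congr rfl (fun j hj => by
      simp only [Finset.mem_filter] at hj
      rw [show ((i:ℤ) - (j:ℤ)).natAbs = (j:ℕ) - (i:ℕ) by omega])]
    rw [← Finset.sum_image (f := fun e => gSymb α e)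
      (g := fun j : Fin n => (j:ℕ) - (i:ℕ)) (by
        intro x hx y hy hxy
        simp only [Finset.mem_coe, Finset.mem_filter] at hx hy
        dsimp only at hxy
        exact Fin.ext (by omega))]
    refine le_trans (Finset.sum_le_sum_of_subset_of_nonneg ?_ (fun e he _ => hnn' e he))
      (rowBound h1 h2 n)
    intro e he
    simp only [Finset.mem_image, Finset.mem_filter] at he
    obtain ⟨j, ⟨-, hj⟩, rfl⟩ := he
    rw [Finset.mem_Icc]
    have := j.isLt
    omega
  linarith

lemma amgm (a b c : ℝ) : -(|b| * (a^2 + c^2) / 2) ≤ a * (b * c) := by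
  have ha1 : |a * (b * c)| ≤ |b| * (a^2 + c^2) / 2 := by
    rw [abs_mul, abs_mul]
    nlinarith [sq_abs a, sq_abs c, abs_nonneg a, abs_nonneg b, abs_nonneg c,
      sq_nonneg (|a| - |c|), abs_nonneg (b*c)]
  linarith [neg_abs_le (a * (b * c))]

lemma sum_erase_eq_sum_ite {ι : Type*} [Fintype ι] [DecidableEq ι] (i : ι) (f : ι → ℝ) :
    ∑ j ∈ Finset.univ.erase i, f j = ∑ j, if j = i then 0 else f j := by
  rw [← Finset.sum_erase (a := i) (Finset.univ) (f := fun j => if j = i then 0 else f j) (by simp)]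
  apply Finset.sum_congr rfl
  intro j hj
  rw [if_neg (Finset.mem_erase.mp hj).1]

lemma posdef_of_dom {ι : Type*} [Fintype ι] [DecidableEq ι] (M : Matrix ι ι ℝ)
    (hsym : ∀ i j, M i j = M j i)
    (hdom : ∀ i, ∑ j ∈ Finset.univ.erase i, |M i j| ≤ M i i - 1) :
    M.PosDef := by
  classical
  rw [Matrix.posDef_iff_dotProduct_mulVec]
  constructor
  · ext i j
    simp only [Matrix.conjTranspose_apply, star_trivial]
    exact hsym j i
  · intro x hx
    have hQ : dotProduct (star x) (M.mulVec x) = ∑ i, ∑ j, x i * (M i j * x j) := by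
      simp [dotProduct, Matrix.mulVec, Finset.mul_sum, star]
    rw [hQ]
    set A : ι → ℝ := fun i => ∑ j ∈ Finset.univ.erase i, |M i j| with hA
    set B : ι → ℝ := fun i => ∑ j ∈ Finset.univ.erase i, |M i j| * x j ^ 2 with hB
    have hswap : ∑ i, B i = ∑ i, A i * x i ^ 2 := by
      simp only [hA, hB]
      simp_rw [sum_erase_eq_sum_ite, Finset.sum_mul, ite_mul, zero_mul]
      rw [Finset.sum_comm]
      apply Finset.sum_congr rfl
      intro j _
      apply Finset.sum_congr rfl
      intro i _
      by_cases h : i = j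
      · subst h; simp
      · rw [if_neg h, if_neg (Ne.symm h), hsym]
    have hrow : ∀ i, ∑ j, x i * (M i j * x j)
        ≥ M i i * x i ^ 2 - (A i * x i ^ 2 + B i) / 2 := by
      intro i
      rw [← Finset.add_sum_erase _ _ (Finset.mem_univ i)]
      have h1 : ∑ j ∈ Finset.univ.erase i, x i * (M i j * x j)
          ≥ -((A i * x i ^ 2 + B i) / 2) := by
        have h2 : ∑ j ∈ Finset.univ.erase i, -(|M i j| * (x i ^ 2 + x j ^ 2) / 2)
            ≤ ∑ j ∈ Finset.univ.erase i, x i * (M i j * x j) :=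
          Finset.sum_le_sum fun j _ => amgm (x i) (M i j) (x j)
        have h3 : ∑ j ∈ Finset.univ.erase i, (|M i j| * (x i ^ 2 + x j ^ 2) / 2)
            = ((∑ j ∈ Finset.univ.erase i, |M i j|) * x i ^ 2
              + ∑ j ∈ Finset.univ.erase i, |M i j| * x j ^ 2) / 2 := by
          rw [Finset.sum_mul, ← Finset.sum_add_distrib, ← Finset.sum_div]
          congr 1
          apply Finset.sum_congr rfl
          intros; ring
        rw [Finset.sum_neg_distrib, h3] at h2
        simp only [hA, hB]
        linarith [h2]
      nlinarith [h1, sq_nonneg (x i)]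
    have step1 : ∑ i, (M i i * x i ^ 2 - (A i * x i ^ 2 + B i) / 2)
        ≤ ∑ i, ∑ j, x i * (M i j * x j) := Finset.sum_le_sum fun i _ => hrow i
    have step2 : ∑ i, (M i i * x i ^ 2 - (A i * x i ^ 2 + B i) / 2)
        = ∑ i, (M i i * x i ^ 2) - ((∑ i, A i * x i ^ 2) + ∑ i, B i) / 2 := by
      rw [Finset.sum_sub_distrib, ← Finset.sum_div, ← Finset.sum_add_distrib]
    have step3 : ∑ i, (M i i * x i ^ 2) - ((∑ i, A i * x i ^ 2) + ∑ i, B i) / 2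
        = ∑ i, (M i i * x i ^ 2 - A i * x i ^ 2) := by
      rw [hswap, Finset.sum_sub_distrib]
      ring
    have step4 : ∑ i, x i ^ 2 ≤ ∑ i, (M i i * x i ^ 2 - A i * x i ^ 2) := by
      apply Finset.sum_le_sum
      intro i _
      have := hdom i
      simp only [hA]
      nlinarith [sq_nonneg (x i)]
    obtain ⟨k, hk⟩ := Function.ne_iff.mp hx
    have hpos : 0 < ∑ i, x i ^ 2 :=
      Finset.sum_pos' (fun i _ => sq_nonneg _)
        ⟨k, Finset.mem_univ k, lt_of_le_of_ne (sq_nonneg _) (Ne.symm (pow_ne_zero 2 hk))⟩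
    linarith

omit h1 h2

lemma gSymb_zero (α : ℝ) : gSymb α 0 = -(2*α) := by
  have h : gSymb α 0 = 2 * g α 1 := rfl
  rw [h, g_one]; ring

lemma Amat_apply (α₁ α₂ : ℝ) (n₁ n₂ : ℕ) (cx cy : ℝ) (i j : Fin n₂ × Fin n₁) :
    Amat α₁ α₂ n₁ n₂ cx cy i j =
      cx * ((if i.1 = j.1 then (1:ℝ) else 0) * gSymb α₁ (((i.2 : ℤ) - (j.2 : ℤ)).natAbs)) +
      cy * (gSymb α₂ (((i.1 : ℤ) - (j.1 : ℤ)).natAbs) * (if i.2 = j.2 then (1:ℝ) else 0)) := by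
  simp [Amat, Matrix.kroneckerMap_apply, Matrix.one_apply, Gmat]

lemma Amat_symm (α₁ α₂ : ℝ) (n₁ n₂ : ℕ) (cx cy : ℝ) (i j : Fin n₂ × Fin n₁) :
    Amat α₁ α₂ n₁ n₂ cx cy i j = Amat α₁ α₂ n₁ n₂ cx cy j i := by
  rw [Amat_apply, Amat_apply]
  rw [show (((i.2 : ℤ) - (j.2 : ℤ)).natAbs) = (((j.2 : ℤ) - (i.2 : ℤ)).natAbs) by omega,
    show (((i.1 : ℤ) - (j.1 : ℤ)).natAbs) = (((j.1 : ℤ) - (i.1 : ℤ)).natAbs) by omega]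
  by_cases ha : i.1 = j.1 <;> by_cases hb : i.2 = j.2 <;> simp [ha, hb, Ne.symm]

theorem stmt7 (α₁ α₂ : ℝ) (hα₁ : 1 < α₁ ∧ α₁ < 2) (hα₂ : 1 < α₂ ∧ α₂ < 2)
    (n₁ n₂ : ℕ) (hn₁ : 1 ≤ n₁) (hn₂ : 1 ≤ n₂) (cx cy : ℝ) (hcx : 0 < cx) (hcy : 0 < cy)
    (d : Fin n₂ × Fin n₁ → ℝ) (hd : ∀ i, 0 ≤ d i)
    (M : Matrix (Fin n₂ × Fin n₁) (Fin n₂ × Fin n₁) ℝ)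
    (hM : M = 1 - Amat α₁ α₂ n₁ n₂ cx cy + Matrix.diagonal d) :
    M.PosDef ∧ ∀ i, ∑ j ∈ Finset.univ \ {i}, |M i j| ≤ M i i - 1 := by
  obtain ⟨ha1, ha2⟩ := hα₁
  obtain ⟨hb1, hb2⟩ := hα₂
  have hMii : ∀ i, M i i = 1 + 2*cx*α₁ + 2*cy*α₂ + d i := by
    intro i
    rw [hM]
    simp only [Matrix.sub_apply, Matrix.add_apply, Matrix.one_apply_eq,
      Matrix.diagonal_apply_eq]
    rw [Amat_apply]
    simp only [sub_self, Int.natAbs_zero, if_pos rfl]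
    rw [gSymb_zero, gSymb_zero]
    simp only [if_true]
    ring
  have habs : ∀ i j : Fin n₂ × Fin n₁, j ≠ i →
      |M i j| = (if j.1 = i.1 then (if j.2 = i.2 then 0
            else cx * gSymb α₁ (((i.2:ℤ)-(j.2:ℤ)).natAbs)) else 0)
        + (if j.2 = i.2 then (if j.1 = i.1 then 0
            else cy * gSymb α₂ (((i.1:ℤ)-(j.1:ℤ)).natAbs)) else 0) := by
    intro i j hj
    have hne : i ≠ j := fun h => hj h.symm
    have hMij : M i j = -(Amat α₁ α₂ n₁ n₂ cx cy i j) := by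
      rw [hM]
      simp [Matrix.sub_apply, Matrix.add_apply, Matrix.one_apply_ne hne,
        Matrix.diagonal_apply_ne _ hne]
    rw [hMij, Amat_apply]
    by_cases hc1 : i.1 = j.1
    · have hc2 : i.2 ≠ j.2 := fun h => hne (Prod.ext hc1 h)
      have hv : (i.2:ℕ) ≠ (j.2:ℕ) := fun h => hc2 (Fin.ext h)
      obtain ⟨e, he⟩ : ∃ e, (((i.2:ℤ)-(j.2:ℤ)).natAbs) = e + 1 :=
        ⟨(((i.2:ℤ)-(j.2:ℤ)).natAbs) - 1, by omega⟩
      have hnn : 0 ≤ gSymb α₁ (((i.2:ℤ)-(j.2:ℤ)).natAbs) := by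
        rw [he]; exact gSymb_nonneg ha1 ha2 e
      rw [if_pos hc1, if_neg hc2, if_pos hc1.symm, if_neg (Ne.symm hc2), if_neg (Ne.symm hc2)]
      have hexp : -(cx * ((1:ℝ) * gSymb α₁ (((i.2:ℤ)-(j.2:ℤ)).natAbs))
          + cy * (gSymb α₂ (((i.1:ℤ)-(j.1:ℤ)).natAbs) * 0))
          = -(cx * gSymb α₁ (((i.2:ℤ)-(j.2:ℤ)).natAbs)) := by ring
      rw [hexp, abs_neg, abs_of_nonneg (mul_nonneg hcx.le hnn)]
      ring
    · by_cases hc2 : i.2 = j.2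
      · have hv : (i.1:ℕ) ≠ (j.1:ℕ) := fun h => hc1 (Fin.ext h)
        obtain ⟨e, he⟩ : ∃ e, (((i.1:ℤ)-(j.1:ℤ)).natAbs) = e + 1 :=
          ⟨(((i.1:ℤ)-(j.1:ℤ)).natAbs) - 1, by omega⟩
        have hnn : 0 ≤ gSymb α₂ (((i.1:ℤ)-(j.1:ℤ)).natAbs) := by
          rw [he]; exact gSymb_nonneg hb1 hb2 e
        rw [if_neg hc1, if_pos hc2, if_pos hc2.symm, if_neg (Ne.symm hc1), if_neg (Ne.symm hc1)]
        have hexp : -(cx * ((0:ℝ) * gSymb α₁ (((i.2:ℤ)-(j.2:ℤ)).natAbs))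
            + cy * (gSymb α₂ (((i.1:ℤ)-(j.1:ℤ)).natAbs) * 1))
            = -(cy * gSymb α₂ (((i.1:ℤ)-(j.1:ℤ)).natAbs)) := by ring
        rw [hexp, abs_neg, abs_of_nonneg (mul_nonneg hcy.le hnn), if_pos hc2.symm]
        ring
      · rw [if_neg hc1, if_neg hc2, if_neg (Ne.symm hc1), if_neg (Ne.symm hc2)]
        simp
  have part2 : ∀ i, ∑ j ∈ Finset.univ \ {i}, |M i j| ≤ M i i - 1 := by
    intro i
    rw [Finset.sdiff_singleton_eq_erase]
    have hrew : ∑ j ∈ Finset.univ.erase i, |M i j| =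
        (∑ b : Fin n₁, if b = i.2 then 0 else cx * gSymb α₁ (((i.2:ℤ)-(b:ℤ)).natAbs))
        + (∑ a : Fin n₂, if a = i.1 then 0 else cy * gSymb α₂ (((i.1:ℤ)-(a:ℤ)).natAbs)) := by
      rw [sum_erase_eq_sum_ite]
      have hpt : ∀ j : Fin n₂ × Fin n₁, (if j = i then 0 else |M i j|)
          = (if j.1 = i.1 then (if j.2 = i.2 then 0
              else cx * gSymb α₁ (((i.2:ℤ)-(j.2:ℤ)).natAbs)) else 0)
            + (if j.2 = i.2 then (if j.1 = i.1 then 0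
              else cy * gSymb α₂ (((i.1:ℤ)-(j.1:ℤ)).natAbs)) else 0) := by
        intro j
        by_cases hj : j = i
        · subst hj; simp
        · rw [if_neg hj, habs i j hj]
      rw [Finset.sum_congr rfl (fun j _ => hpt j), Finset.sum_add_distrib]
      congr 1
      · rw [Fintype.sum_prod_type]
        have hin : ∀ a : Fin n₂,
            (∑ b : Fin n₁, ((if ((a,b) : Fin n₂ × Fin n₁).1 = i.1 then (if ((a,b) : Fin n₂ × Fin n₁).2 = i.2 then 0
              else cx * gSymb α₁ (((i.2:ℤ)-(b:ℤ)).natAbs)) else 0) : ℝ))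
            = if a = i.1 then (∑ b : Fin n₁, if b = i.2 then (0:ℝ)
              else cx * gSymb α₁ (((i.2:ℤ)-(b:ℤ)).natAbs)) else 0 := by
          intro a
          by_cases haa : a = i.1
          · rw [if_pos haa]
            apply Finset.sum_congr rfl
            intro b _
            rw [if_pos haa]
          · rw [if_neg haa]
            apply Finset.sum_eq_zero
            intro b _
            rw [if_neg haa]
        rw [Finset.sum_congr rfl (fun a _ => hin a), Finset.sum_ite_eq' Finset.univ i.1]
        simp
      · rw [Fintype.sum_prod_type]
        have hin : ∀ a : Fin n₂,
            (∑ b : Fin n₁, ((if ((a,b) : Fin n₂ × Fin n₁).2 = i.2 then (if ((a,b) : Fin n₂ × Fin n₁).1 = i.1 then 0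
              else cy * gSymb α₂ (((i.1:ℤ)-(a:ℤ)).natAbs)) else 0) : ℝ))
            = if a = i.1 then 0 else cy * gSymb α₂ (((i.1:ℤ)-(a:ℤ)).natAbs) := by
          intro a
          have : ∀ b : Fin n₁, ((if (b : Fin n₁) = i.2 then (if a = i.1 then 0
              else cy * gSymb α₂ (((i.1:ℤ)-(a:ℤ)).natAbs)) else 0) : ℝ)
              = if b = i.2 then (if a = i.1 then 0
              else cy * gSymb α₂ (((i.1:ℤ)-(a:ℤ)).natAbs)) else 0 := fun b => rfl
          rw [Finset.sum_congr rfl (fun b _ => this b), Finset.sum_ite_eq' Finset.univ i.2]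
          simp only [Finset.mem_univ, if_true]
        rw [Finset.sum_congr rfl (fun a _ => hin a)]
    rw [hrew, hMii i]
    have b1 : (∑ b : Fin n₁, if b = i.2 then (0:ℝ)
        else cx * gSymb α₁ (((i.2:ℤ)-(b:ℤ)).natAbs)) ≤ cx * (2*α₁) := by
      rw [← sum_erase_eq_sum_ite, ← Finset.mul_sum]
      exact mul_le_mul_of_nonneg_left (offdiagSum ha1 ha2 n₁ i.2) hcx.le
    have b2 : (∑ a : Fin n₂, if a = i.1 then (0:ℝ)
        else cy * gSymb α₂ (((i.1:ℤ)-(a:ℤ)).natAbs)) ≤ cy * (2*α₂) := by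
      rw [← sum_erase_eq_sum_ite, ← Finset.mul_sum]
      exact mul_le_mul_of_nonneg_left (offdiagSum hb1 hb2 n₂ i.1) hcy.le
    have := hd i
    linarith
  have hsym : ∀ i j, M i j = M j i := by
    intro i j
    rcases eq_or_ne i j with rfl | hij
    · rfl
    · rw [hM]
      simp only [Matrix.sub_apply, Matrix.add_apply, Matrix.one_apply_ne hij,
        Matrix.one_apply_ne (Ne.symm hij), Matrix.diagonal_apply_ne _ hij,
        Matrix.diagonal_apply_ne _ (Ne.symm hij), Amat_symm α₁ α₂ n₁ n₂ cx cy i j]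
  refine ⟨posdef_of_dom M hsym (fun i => ?_), part2⟩
  have := part2 i
  rwa [Finset.sdiff_singleton_eq_erase] at this
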